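/- Let X be an irreducible variety over an algebraically closed field k equipped with an action of the multiplicative monoid A¹ (extending a Gₘ-action), and suppose the fixed locus X⁰ = X^{Gₘ} consists of a single point x. Then X is unibranch at x, i.e., the normalization of X has exactly one point above x. -/

import Mathlib

open Polynomial DirectSum

set_option linter.unusedSectionVars false
set_option maxHeartbeats 1000000
set_option synthInstance.maxHeartbeats 400000

noncomputable section UBAux

variable {k : Type} [Field k]
variable {R : Type} [CommRing R] [IsDomain R] [Algebra k R]
variable (𝒜 : ℕ → Submodule k R) [GradedAlgebra 𝒜]

noncomputable def tauR : R →+* R[X] :=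
  (DirectSum.toSemiring
    (fun n => (Polynomial.monomial (R := R) n).toAddMonoidHom.comp
      ((𝒜 n).subtype.toAddMonoidHom))
    (by
      simp only [AddMonoidHom.comp_apply, LinearMap.toAddMonoidHom_coe,
        Submodule.subtype_apply]
      rw [SetLike.coe_gOne, Polynomial.monomial_zero_one])
    (by
      intro i j ai aj
      simp only [AddMonoidHom.comp_apply, LinearMap.toAddMonoidHom_coe,
        Submodule.subtype_apply]
      rw [SetLike.coe_gMul, Polynomial.monomial_mul_monomial])).comp
    (DirectSum.decomposeRingEquiv 𝒜).toRingHom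

lemma tauR_of_mem {n : ℕ} {x : R} (hx : x ∈ 𝒜 n) :
    tauR 𝒜 x = Polynomial.monomial n x := by
  unfold tauR
  rw [RingHom.comp_apply]
  have h1 : (DirectSum.decomposeRingEquiv 𝒜).toRingHom x
      = DirectSum.of (fun i => 𝒜 i) n ⟨x, hx⟩ := by
    exact DirectSum.decompose_of_mem 𝒜 hx
  rw [h1, DirectSum.toSemiring_of]
  rfl

lemma hom_eq_on {T : Type} [CommRing T] (f g : R →+* T)
    (h : ∀ (n : ℕ) (x : R), x ∈ 𝒜 n → f x = g x) (r : R) : f r = g r := by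
  classical
  rw [← DirectSum.sum_support_decompose 𝒜 r, map_sum, map_sum]
  exact Finset.sum_congr rfl fun i _ => h i _ (SetLike.coe_mem _)

lemma tauR_eval_one (r : R) : (tauR 𝒜 r).eval 1 = r := by
  have := hom_eq_on 𝒜 ((Polynomial.evalRingHom (1 : R)).comp (tauR 𝒜)) (RingHom.id R)
    (fun n x hx => by
      simp only [RingHom.comp_apply, RingHom.id_apply]
      rw [tauR_of_mem 𝒜 hx]
      simp [Polynomial.eval_monomial]) r
  simpa using this

lemma tauR_injective : Function.Injective (tauR 𝒜) := by
  intro a b h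
  have := congrArg (Polynomial.eval 1) h
  rwa [tauR_eval_one, tauR_eval_one] at this

/-! ### tauK, tauHat -/

/-- `tauK` : same coaction with values in `(Frac R)[X]`. -/
noncomputable def tauK : R →+* (FractionRing R)[X] :=
  (Polynomial.mapRingHom (algebraMap R (FractionRing R))).comp (tauR 𝒜)

lemma tauK_of_mem {n : ℕ} {x : R} (hx : x ∈ 𝒜 n) :
    tauK 𝒜 x = Polynomial.monomial n (algebraMap R (FractionRing R) x) := by
  unfold tauK
  rw [RingHom.comp_apply, tauR_of_mem 𝒜 hx]
  simp [Polynomial.coe_mapRingHom, Polynomial.map_monomial]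

lemma tauK_coeff (r : R) (n : ℕ) :
    (tauK 𝒜 r).coeff n = algebraMap R (FractionRing R) (DirectSum.decompose 𝒜 r n) := by
  classical
  conv_lhs => rw [← DirectSum.sum_support_decompose 𝒜 r]
  rw [map_sum, Polynomial.finset_sum_coeff]
  have : ∀ i ∈ (DirectSum.decompose 𝒜 r).support,
      (tauK 𝒜 (DirectSum.decompose 𝒜 r i)).coeff n
        = if i = n then algebraMap R (FractionRing R) (DirectSum.decompose 𝒜 r i) else 0 := by
    intro i _
    rw [tauK_of_mem 𝒜 (SetLike.coe_mem _), Polynomial.coeff_monomial]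
  rw [Finset.sum_congr rfl this, Finset.sum_ite_eq' (DirectSum.decompose 𝒜 r).support n
    (fun i => algebraMap R (FractionRing R) (DirectSum.decompose 𝒜 r i))]
  split_ifs with h
  · rfl
  · rw [DFinsupp.notMem_support_iff.mp h]
    simp

lemma tauK_injective : Function.Injective (tauK 𝒜) := by
  unfold tauK
  exact (Polynomial.map_injective _ (IsFractionRing.injective R (FractionRing R))).comp
    (tauR_injective 𝒜)

lemma tauK_eval_one (r : R) :
    (tauK 𝒜 r).eval 1 = algebraMap R (FractionRing R) r := by
  unfold tauK
  rw [RingHom.comp_apply, Polynomial.coe_mapRingHom, Polynomial.eval_map,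
    Polynomial.eval₂_at_one, tauR_eval_one]

/-- `tauL` : the coaction with values in `Frac((Frac R)[X])`. -/
noncomputable def tauL : R →+* FractionRing ((FractionRing R)[X]) :=
  (algebraMap ((FractionRing R)[X]) (FractionRing ((FractionRing R)[X]))).comp (tauK 𝒜)

lemma tauL_injective : Function.Injective (tauL 𝒜) :=
  (IsFractionRing.injective ((FractionRing R)[X]) _).comp (tauK_injective 𝒜)

/-- `tauHat : K →+* L` extension of the coaction to the fraction field. -/
noncomputable def tauHat : FractionRing R →+* FractionRing ((FractionRing R)[X]) :=
  IsFractionRing.lift (g := tauL 𝒜) (tauL_injective 𝒜)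

lemma tauHat_algebraMap (r : R) :
    tauHat 𝒜 (algebraMap R (FractionRing R) r)
      = algebraMap ((FractionRing R)[X]) _ (tauK 𝒜 r) :=
  IsFractionRing.lift_algebraMap (tauL_injective 𝒜) r

lemma tauHat_injective : Function.Injective (tauHat 𝒜) :=
  (tauHat 𝒜).injective

/-! ### The polynomial attached to an integral element -/

lemma exists_F {y : FractionRing R} (hy : IsIntegral R y) :
    ∃ F : (FractionRing R)[X],
      algebraMap ((FractionRing R)[X]) (FractionRing ((FractionRing R)[X])) F
        = tauHat 𝒜 y := by
  obtain ⟨p, hmonic, hp⟩ := hy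
  have hint : IsIntegral ((FractionRing R)[X]) (tauHat 𝒜 y) := by
    refine ⟨p.map (tauK 𝒜), hmonic.map _, ?_⟩
    rw [Polynomial.eval₂_map]
    have hcomp : (algebraMap ((FractionRing R)[X])
        (FractionRing ((FractionRing R)[X]))).comp (tauK 𝒜)
        = (tauHat 𝒜).comp (algebraMap R (FractionRing R)) := by
      ext r
      exact (tauHat_algebraMap 𝒜 r).symm
    rw [hcomp, ← Polynomial.hom_eval₂, hp, map_zero]
  exact IsIntegrallyClosed.isIntegral_iff.mp hint

/-- The polynomial `F_y` for an element of the integral closure. -/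
noncomputable def Ffn (y : integralClosure R (FractionRing R)) : (FractionRing R)[X] :=
  Classical.choose (exists_F 𝒜 y.2)

lemma Ffn_spec (y : integralClosure R (FractionRing R)) :
    algebraMap ((FractionRing R)[X]) (FractionRing ((FractionRing R)[X])) (Ffn 𝒜 y)
      = tauHat 𝒜 ↑y :=
  Classical.choose_spec (exists_F 𝒜 y.2)

lemma Ffn_eq (y : integralClosure R (FractionRing R)) (F : (FractionRing R)[X])
    (h : algebraMap ((FractionRing R)[X]) (FractionRing ((FractionRing R)[X])) F
      = tauHat 𝒜 ↑y) : Ffn 𝒜 y = F :=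
  IsFractionRing.injective ((FractionRing R)[X]) _ (by rw [Ffn_spec, h])

lemma Ffn_algebraMap (r : R) :
    Ffn 𝒜 (algebraMap R (integralClosure R (FractionRing R)) r) = tauK 𝒜 r :=
  Ffn_eq 𝒜 _ _ (by rw [← tauHat_algebraMap 𝒜 r]; rfl)

lemma Ffn_one : Ffn 𝒜 1 = 1 :=
  Ffn_eq 𝒜 _ _ (by simp)

lemma Ffn_zero : Ffn 𝒜 0 = 0 :=
  Ffn_eq 𝒜 _ _ (by simp)

lemma Ffn_mul (x y : integralClosure R (FractionRing R)) :
    Ffn 𝒜 (x * y) = Ffn 𝒜 x * Ffn 𝒜 y :=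
  Ffn_eq 𝒜 _ _ (by rw [map_mul, Ffn_spec, Ffn_spec, ← map_mul]; norm_cast)

lemma Ffn_add (x y : integralClosure R (FractionRing R)) :
    Ffn 𝒜 (x + y) = Ffn 𝒜 x + Ffn 𝒜 y :=
  Ffn_eq 𝒜 _ _ (by rw [map_add, Ffn_spec, Ffn_spec, ← map_add]; norm_cast)

lemma Ffn_eval_one (y : integralClosure R (FractionRing R)) :
    (Ffn 𝒜 y).eval 1 = (y : FractionRing R) := by
  obtain ⟨⟨a, b⟩, hab⟩ := IsLocalization.surj (nonZeroDivisors R) (y : FractionRing R)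
  have hb : algebraMap R (FractionRing R) b ≠ 0 :=
    IsFractionRing.to_map_ne_zero_of_mem_nonZeroDivisors b.2
  have key : Ffn 𝒜 y * tauK 𝒜 b = tauK 𝒜 a := by
    apply IsFractionRing.injective ((FractionRing R)[X])
      (FractionRing ((FractionRing R)[X]))
    rw [map_mul, Ffn_spec]
    have h1 : algebraMap ((FractionRing R)[X]) _ (tauK 𝒜 (b : R))
        = tauHat 𝒜 (algebraMap R (FractionRing R) b) := (tauHat_algebraMap 𝒜 b).symm
    have h2 : algebraMap ((FractionRing R)[X]) _ (tauK 𝒜 a)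
        = tauHat 𝒜 (algebraMap R (FractionRing R) a) := (tauHat_algebraMap 𝒜 a).symm
    rw [h1, h2, ← map_mul, hab]
  have := congrArg (Polynomial.eval 1) key
  rw [Polynomial.eval_mul, tauK_eval_one, tauK_eval_one] at this
  have hy : (y : FractionRing R) * algebraMap R (FractionRing R) b
      = algebraMap R (FractionRing R) a := hab
  rw [← hy] at this
  exact mul_right_cancel₀ hb this

/-- The "evaluation at the fixed point" ring hom `ρ`. -/
noncomputable def rho : integralClosure R (FractionRing R) →+* FractionRing R where
  toFun y := (Ffn 𝒜 y).coeff 0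
  map_one' := by show (Ffn 𝒜 1).coeff 0 = 1; rw [Ffn_one]; simp
  map_mul' x y := by
    show (Ffn 𝒜 (x * y)).coeff 0 = (Ffn 𝒜 x).coeff 0 * (Ffn 𝒜 y).coeff 0
    rw [Ffn_mul, Polynomial.mul_coeff_zero]
  map_zero' := by show (Ffn 𝒜 0).coeff 0 = 0; rw [Ffn_zero]; simp
  map_add' x y := by
    show (Ffn 𝒜 (x + y)).coeff 0 = (Ffn 𝒜 x).coeff 0 + (Ffn 𝒜 y).coeff 0
    rw [Ffn_add, Polynomial.coeff_add]

lemma rho_algebraMap (r : R) :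
    rho 𝒜 (algebraMap R (integralClosure R (FractionRing R)) r)
      = algebraMap R (FractionRing R) (DirectSum.decompose 𝒜 r 0) := by
  show (Ffn 𝒜 _).coeff 0 = _
  rw [Ffn_algebraMap, tauK_coeff]

/-! ### Homogeneity of the coefficients -/

/-- Substitution `t ↦ t·u` on polynomials, with values in `L[u]`. -/
noncomputable def gHom : (FractionRing R)[X] →+* Polynomial (FractionRing ((FractionRing R)[X])) :=
  Polynomial.eval₂RingHom
    ((Polynomial.C).comp ((algebraMap ((FractionRing R)[X])
      (FractionRing ((FractionRing R)[X]))).comp (Polynomial.C)))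
    (Polynomial.C (algebraMap ((FractionRing R)[X])
      (FractionRing ((FractionRing R)[X])) Polynomial.X) * Polynomial.X)

/-- Coefficient-wise `tauHat`, `t ↦ u`. -/
noncomputable def hHom : (FractionRing R)[X] →+* Polynomial (FractionRing ((FractionRing R)[X])) :=
  Polynomial.mapRingHom (tauHat 𝒜)

lemma gHom_monomial (e : ℕ) (a : FractionRing R) :
    gHom (R := R) (Polynomial.monomial e a)
      = Polynomial.C (algebraMap ((FractionRing R)[X]) (FractionRing ((FractionRing R)[X]))
          (Polynomial.C a * Polynomial.X ^ e)) * Polynomial.X ^ e := by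
  unfold gHom
  rw [Polynomial.coe_eval₂RingHom, Polynomial.eval₂_monomial]
  rw [mul_pow, ← mul_assoc]
  simp only [RingHom.comp_apply]
  rw [← Polynomial.C_pow, ← Polynomial.C_mul, ← map_pow, ← map_mul]

lemma gHom_coeff (F : (FractionRing R)[X]) (d : ℕ) :
    (gHom (R := R) F).coeff d
      = algebraMap ((FractionRing R)[X]) (FractionRing ((FractionRing R)[X]))
          (Polynomial.C (F.coeff d) * Polynomial.X ^ d) := by
  induction F using Polynomial.induction_on' with
  | add p q hp hq =>
    rw [map_add, Polynomial.coeff_add, hp, hq, Polynomial.coeff_add, Polynomial.C_add,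
      add_mul, map_add]
  | monomial e a =>
    rw [gHom_monomial, Polynomial.coeff_C_mul, Polynomial.coeff_X_pow,
      Polynomial.coeff_monomial]
    by_cases h : d = e
    · subst h; simp
    · have h' : ¬ (e = d) := fun he => h he.symm
      simp [h, h']

lemma gHom_injective : Function.Injective (gHom (R := R)) := by
  have hcomp : (Polynomial.evalRingHom
      ((1 : FractionRing ((FractionRing R)[X])))).comp (gHom (R := R))
      = algebraMap ((FractionRing R)[X]) (FractionRing ((FractionRing R)[X])) := by
    apply Polynomial.ringHom_ext
    · intro a
      unfold gHom
      simp [Polynomial.eval₂_C]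
    · unfold gHom
      simp [Polynomial.eval₂_X]
  intro a b hab
  apply IsFractionRing.injective ((FractionRing R)[X]) (FractionRing ((FractionRing R)[X]))
  rw [← hcomp]
  simp only [RingHom.comp_apply, hab]

lemma hHom_injective : Function.Injective (hHom 𝒜 (R := R)) :=
  Polynomial.map_injective _ (tauHat_injective 𝒜)

lemma gH_eq_hH_on_tauK (r : R) : gHom (R := R) (tauK 𝒜 r) = hHom 𝒜 (tauK 𝒜 r) := by
  refine hom_eq_on 𝒜 ((gHom (R := R)).comp (tauK 𝒜)) ((hHom 𝒜).comp (tauK 𝒜)) ?_ r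
  intro n x hx
  simp only [RingHom.comp_apply]
  rw [tauK_of_mem 𝒜 hx, gHom_monomial]
  unfold hHom
  rw [Polynomial.coe_mapRingHom, Polynomial.map_monomial,
    ← Polynomial.C_mul_X_pow_eq_monomial]
  have hx2 : algebraMap ((FractionRing R)[X]) (FractionRing ((FractionRing R)[X]))
      (Polynomial.C (algebraMap R (FractionRing R) x) * Polynomial.X ^ n)
      = tauHat 𝒜 (algebraMap R (FractionRing R) x) := by
    rw [Polynomial.C_mul_X_pow_eq_monomial, ← tauK_of_mem 𝒜 hx]
    exact (tauHat_algebraMap 𝒜 x).symm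
  rw [hx2]

lemma coeff_homog (y : integralClosure R (FractionRing R)) (d : ℕ) :
    tauHat 𝒜 ((Ffn 𝒜 y).coeff d)
      = algebraMap ((FractionRing R)[X]) (FractionRing ((FractionRing R)[X]))
          (Polynomial.C ((Ffn 𝒜 y).coeff d) * Polynomial.X ^ d) := by
  classical
  have gInj : Function.Injective ((algebraMap (Polynomial (FractionRing ((FractionRing R)[X])))
      (FractionRing (Polynomial (FractionRing ((FractionRing R)[X]))))).comp
      (gHom (R := R))) :=
    (IsFractionRing.injective (Polynomial (FractionRing ((FractionRing R)[X]))) _).comp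
      (gHom_injective (R := R))
  have hInj : Function.Injective ((algebraMap (Polynomial (FractionRing ((FractionRing R)[X])))
      (FractionRing (Polynomial (FractionRing ((FractionRing R)[X]))))).comp
      (hHom 𝒜 (R := R))) :=
    (IsFractionRing.injective (Polynomial (FractionRing ((FractionRing R)[X]))) _).comp
      (hHom_injective 𝒜)
  have hcomm : (IsFractionRing.lift gInj).comp (tauHat 𝒜)
      = (IsFractionRing.lift hInj).comp (tauHat 𝒜) := by
    apply IsLocalization.ringHom_ext (nonZeroDivisors R)
    ext r
    simp only [RingHom.comp_apply]
    rw [tauHat_algebraMap]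
    rw [IsFractionRing.lift_algebraMap, IsFractionRing.lift_algebraMap]
    simp only [RingHom.comp_apply]
    rw [gH_eq_hH_on_tauK]
  have key : gHom (R := R) (Ffn 𝒜 y) = hHom 𝒜 (Ffn 𝒜 y) := by
    have h1 : algebraMap (Polynomial (FractionRing ((FractionRing R)[X])))
        (FractionRing (Polynomial (FractionRing ((FractionRing R)[X]))))
        (gHom (R := R) (Ffn 𝒜 y))
        = IsFractionRing.lift gInj (algebraMap ((FractionRing R)[X])
            (FractionRing ((FractionRing R)[X])) (Ffn 𝒜 y)) :=
      (IsFractionRing.lift_algebraMap gInj _).symm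
    have h2 : algebraMap (Polynomial (FractionRing ((FractionRing R)[X])))
        (FractionRing (Polynomial (FractionRing ((FractionRing R)[X]))))
        (hHom 𝒜 (Ffn 𝒜 y))
        = IsFractionRing.lift hInj (algebraMap ((FractionRing R)[X])
            (FractionRing ((FractionRing R)[X])) (Ffn 𝒜 y)) :=
      (IsFractionRing.lift_algebraMap hInj _).symm
    have h3 : algebraMap (Polynomial (FractionRing ((FractionRing R)[X])))
        (FractionRing (Polynomial (FractionRing ((FractionRing R)[X]))))
        (gHom (R := R) (Ffn 𝒜 y))
        = algebraMap (Polynomial (FractionRing ((FractionRing R)[X])))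
        (FractionRing (Polynomial (FractionRing ((FractionRing R)[X]))))
        (hHom 𝒜 (Ffn 𝒜 y)) := by
      rw [h1, h2, Ffn_spec]
      exact congrFun (congrArg (fun f => f.toFun) hcomm) ↑y
    exact IsFractionRing.injective
      (Polynomial (FractionRing ((FractionRing R)[X]))) _ h3
  have hc := congrArg (fun p => Polynomial.coeff p d) key
  rw [gHom_coeff] at hc
  unfold hHom at hc
  rw [Polynomial.coe_mapRingHom, Polynomial.coeff_map] at hc
  exact hc.symm


/-! ### The `Gₘ`-action on `R`, `K` and the integral closure -/

lemma algebraMap_mem_zero (a : k) : algebraMap k R a ∈ 𝒜 0 := by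
  rw [Algebra.algebraMap_eq_smul_one]
  exact Submodule.smul_mem _ _ (SetLike.one_mem_graded 𝒜)

noncomputable def sigmaR (c : k) : R →+* R :=
  (Polynomial.evalRingHom (algebraMap k R c)).comp (tauR 𝒜)

lemma sigmaR_of_mem {c : k} {n : ℕ} {x : R} (hx : x ∈ 𝒜 n) :
    sigmaR 𝒜 c x = algebraMap k R c ^ n * x := by
  unfold sigmaR
  rw [RingHom.comp_apply, tauR_of_mem 𝒜 hx]
  simp [Polynomial.eval_monomial, mul_comm]

lemma sigmaR_mem {c : k} {n : ℕ} {x : R} (hx : x ∈ 𝒜 n) : sigmaR 𝒜 c x ∈ 𝒜 n := by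
  rw [sigmaR_of_mem 𝒜 hx, ← map_pow, ← Algebra.smul_def]
  exact Submodule.smul_mem _ _ hx

lemma sigmaR_comp (c c' : k) (r : R) :
    sigmaR 𝒜 c (sigmaR 𝒜 c' r) = sigmaR 𝒜 (c * c') r := by
  refine hom_eq_on 𝒜 ((sigmaR 𝒜 c).comp (sigmaR 𝒜 c')) (sigmaR 𝒜 (c * c')) ?_ r
  intro n x hx
  simp only [RingHom.comp_apply]
  rw [sigmaR_of_mem 𝒜 hx, map_mul, sigmaR_of_mem 𝒜 hx, ← map_pow,
    sigmaR_of_mem 𝒜 (algebraMap_mem_zero 𝒜 (c' ^ n)), sigmaR_of_mem 𝒜 hx]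
  rw [pow_zero, one_mul, map_pow, map_mul, mul_pow]
  ring

lemma sigmaR_one (r : R) : sigmaR 𝒜 1 r = r := by
  have := hom_eq_on 𝒜 (sigmaR 𝒜 1) (RingHom.id R) (fun n x hx => by
    rw [sigmaR_of_mem 𝒜 hx, map_one, one_pow, one_mul, RingHom.id_apply]) r
  simpa using this

lemma sigmaR_injective {c : k} (hc : c ≠ 0) : Function.Injective (sigmaR 𝒜 c) := by
  intro a b h
  have := congrArg (sigmaR 𝒜 c⁻¹) h
  rwa [sigmaR_comp, sigmaR_comp, inv_mul_cancel₀ hc, sigmaR_one, sigmaR_one] at this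

noncomputable def sigmaK (c : k) (hc : c ≠ 0) : FractionRing R →+* FractionRing R :=
  IsFractionRing.lift (g := (algebraMap R (FractionRing R)).comp (sigmaR 𝒜 c))
    ((IsFractionRing.injective R (FractionRing R)).comp (sigmaR_injective 𝒜 hc))

lemma sigmaK_algebraMap (c : k) (hc : c ≠ 0) (r : R) :
    sigmaK 𝒜 c hc (algebraMap R (FractionRing R) r)
      = algebraMap R (FractionRing R) (sigmaR 𝒜 c r) :=
  IsFractionRing.lift_algebraMap _ r

lemma sigmaK_integral (c : k) (hc : c ≠ 0) (y : integralClosure R (FractionRing R)) :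
    IsIntegral R (sigmaK 𝒜 c hc ↑y) := by
  obtain ⟨p, pm, hp⟩ := y.2
  refine ⟨p.map (sigmaR 𝒜 c), pm.map _, ?_⟩
  rw [Polynomial.eval₂_map]
  have hcomp : (algebraMap R (FractionRing R)).comp (sigmaR 𝒜 c)
      = (sigmaK 𝒜 c hc).comp (algebraMap R (FractionRing R)) := by
    ext r
    exact (sigmaK_algebraMap 𝒜 c hc r).symm
  rw [hcomp, ← Polynomial.hom_eval₂, hp, map_zero]

/-- Scaling `t ↦ c·t` on `K[t]`. -/
noncomputable def scP (c : k) : (FractionRing R)[X] →+* (FractionRing R)[X] :=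
  Polynomial.eval₂RingHom (Polynomial.C)
    (Polynomial.C (algebraMap R (FractionRing R) (algebraMap k R c)) * Polynomial.X)

lemma scP_monomial (c : k) (e : ℕ) (a : FractionRing R) :
    scP (R := R) c (Polynomial.monomial e a)
      = Polynomial.monomial e
          (algebraMap R (FractionRing R) (algebraMap k R c) ^ e * a) := by
  unfold scP
  rw [Polynomial.coe_eval₂RingHom, Polynomial.eval₂_monomial]
  rw [mul_pow, ← mul_assoc, ← Polynomial.C_pow, ← Polynomial.C_mul,
    Polynomial.C_mul_X_pow_eq_monomial, mul_comm]

lemma scP_coeff (c : k) (F : (FractionRing R)[X]) (e : ℕ) :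
    (scP (R := R) c F).coeff e
      = algebraMap R (FractionRing R) (algebraMap k R c) ^ e * F.coeff e := by
  induction F using Polynomial.induction_on' with
  | add p q hp hq =>
    rw [map_add, Polynomial.coeff_add, hp, hq, Polynomial.coeff_add, mul_add]
  | monomial m a =>
    rw [scP_monomial, Polynomial.coeff_monomial, Polynomial.coeff_monomial]
    by_cases h : m = e
    · subst h; simp
    · simp [h]

lemma tauK_sigmaR (c : k) (r : R) :
    tauK 𝒜 (sigmaR 𝒜 c r) = scP (R := R) c (tauK 𝒜 r) := by
  refine hom_eq_on 𝒜 ((tauK 𝒜).comp (sigmaR 𝒜 c)) ((scP (R := R) c).comp (tauK 𝒜)) ?_ r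
  intro n x hx
  simp only [RingHom.comp_apply]
  rw [tauK_of_mem 𝒜 (sigmaR_mem 𝒜 hx), tauK_of_mem 𝒜 hx, scP_monomial,
    sigmaR_of_mem 𝒜 hx, map_mul, map_pow]

lemma scP_injective {c : k} (hc : c ≠ 0) : Function.Injective (scP (R := R) c) := by
  have hcK : algebraMap R (FractionRing R) (algebraMap k R c) ≠ 0 := by
    intro h
    exact hc ((algebraMap k R).injective
      (IsFractionRing.injective R (FractionRing R) (by simpa using h)))
  intro F G h
  ext e
  apply mul_left_cancel₀ (pow_ne_zero e hcK)
  rw [← scP_coeff, ← scP_coeff, h]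

lemma tauHat_sigmaK (c : k) (hc : c ≠ 0) (x : FractionRing R) :
    tauHat 𝒜 (sigmaK 𝒜 c hc x)
      = IsFractionRing.lift
          (g := (algebraMap ((FractionRing R)[X]) (FractionRing ((FractionRing R)[X]))).comp
            (scP (R := R) c))
          ((IsFractionRing.injective ((FractionRing R)[X]) _).comp (scP_injective hc))
          (tauHat 𝒜 x) := by
  have hcomp : (tauHat 𝒜).comp (sigmaK 𝒜 c hc)
      = (IsFractionRing.lift
          (g := (algebraMap ((FractionRing R)[X]) (FractionRing ((FractionRing R)[X]))).comp
            (scP (R := R) c))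
          ((IsFractionRing.injective ((FractionRing R)[X]) _).comp (scP_injective hc))).comp
        (tauHat 𝒜) := by
    apply IsLocalization.ringHom_ext (nonZeroDivisors R)
    ext r
    simp only [RingHom.comp_apply]
    rw [sigmaK_algebraMap, tauHat_algebraMap, tauHat_algebraMap,
      IsFractionRing.lift_algebraMap]
    simp only [RingHom.comp_apply]
    rw [tauK_sigmaR]
  exact congrFun (congrArg (fun f => f.toFun) hcomp) x

/-- Key lemma: every coefficient of `F_y` lies in the integral closure. -/
lemma coeff_mem [Infinite k] (y : integralClosure R (FractionRing R)) (d : ℕ) :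
    (Ffn 𝒜 y).coeff d ∈ integralClosure R (FractionRing R) := by
  classical
  suffices H : ∀ (N : ℕ) (y : integralClosure R (FractionRing R)),
      (Ffn 𝒜 y).support.card ≤ N → ∀ d,
      (Ffn 𝒜 y).coeff d ∈ integralClosure R (FractionRing R) from H _ y le_rfl d
  intro N
  induction N with
  | zero =>
    intro y hy d
    have h0 : Ffn 𝒜 y = 0 := by
      rw [← Polynomial.support_eq_empty]
      exact Finset.card_eq_zero.mp (le_antisymm hy (Nat.zero_le _))
    rw [h0, Polynomial.coeff_zero]
    exact zero_mem _
  | succ N IH =>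
    intro y hy d
    by_cases h0 : Ffn 𝒜 y = 0
    · rw [h0, Polynomial.coeff_zero]; exact zero_mem _
    have hne : (Ffn 𝒜 y).support.Nonempty := Polynomial.support_nonempty.mpr h0
    obtain ⟨d₀, hd₀⟩ := hne
    -- choose a good scalar `c`
    have hBadfin : (Set.Finite ({0} ∪
        ⋃ e ∈ ((Ffn 𝒜 y).support.erase d₀ : Finset ℕ),
          {x : k | (Polynomial.X ^ e - Polynomial.X ^ d₀ : Polynomial k).IsRoot x})) := by
      refine (Set.finite_singleton 0).union (Set.Finite.biUnion
        ((Ffn 𝒜 y).support.erase d₀).finite_toSet (fun e he => ?_))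
      refine Polynomial.finite_setOf_isRoot ?_
      intro hP
      have he' : e ≠ d₀ := (Finset.mem_erase.mp he).1
      have hcoe := congrArg (fun p => Polynomial.coeff p e) hP
      have hne2 : ¬ (d₀ = e) := fun hh => he' hh.symm
      simp [Polynomial.coeff_X_pow, he', hne2] at hcoe
    obtain ⟨c, hc⟩ := (hBadfin.infinite_compl).nonempty
    have hc0 : c ≠ 0 := by
      intro h
      exact hc (Set.mem_union_left _ (by simp [h]))
    have hcroot : ∀ e ∈ (Ffn 𝒜 y).support.erase d₀, c ^ e ≠ c ^ d₀ := by
      intro e he h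
      refine hc (Set.mem_union_right _ ?_)
      refine Set.mem_biUnion he ?_
      simp [Polynomial.IsRoot, sub_eq_zero, h]
    -- the element z
    have hzmem : sigmaK 𝒜 c hc0 ↑y
        - algebraMap R (FractionRing R) (algebraMap k R c) ^ d₀ * ↑y
        ∈ integralClosure R (FractionRing R) := by
      refine sub_mem (sigmaK_integral 𝒜 c hc0 y) ?_
      rw [← map_pow]
      exact mul_mem (Subalgebra.algebraMap_mem _ _) y.2
    set z : integralClosure R (FractionRing R) := ⟨_, hzmem⟩ with hz
    set G : (FractionRing R)[X] := scP (R := R) c (Ffn 𝒜 y)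
      - Polynomial.C (algebraMap R (FractionRing R) (algebraMap k R c) ^ d₀) * Ffn 𝒜 y
      with hG
    have hFz : Ffn 𝒜 z = G := by
      apply Ffn_eq
      rw [hG, map_sub, map_mul]
      have h1 : algebraMap ((FractionRing R)[X]) (FractionRing ((FractionRing R)[X]))
          (scP (R := R) c (Ffn 𝒜 y)) = tauHat 𝒜 (sigmaK 𝒜 c hc0 ↑y) := by
        rw [tauHat_sigmaK 𝒜 c hc0, ← Ffn_spec 𝒜 y, IsFractionRing.lift_algebraMap]
        rfl
      have hbase : tauHat 𝒜 (algebraMap R (FractionRing R) (algebraMap k R c))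
          = algebraMap ((FractionRing R)[X]) (FractionRing ((FractionRing R)[X]))
            (Polynomial.C (algebraMap R (FractionRing R) (algebraMap k R c))) := by
        rw [tauHat_algebraMap, tauK_of_mem 𝒜 (algebraMap_mem_zero 𝒜 c),
          Polynomial.monomial_zero_left]
      have h2 : algebraMap ((FractionRing R)[X]) (FractionRing ((FractionRing R)[X]))
          (Polynomial.C (algebraMap R (FractionRing R) (algebraMap k R c) ^ d₀))
          = tauHat 𝒜 (algebraMap R (FractionRing R) (algebraMap k R c) ^ d₀) := by
        rw [Polynomial.C_pow, map_pow, map_pow, hbase]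
      rw [h1, h2, Ffn_spec, ← map_mul, ← map_sub]
    have hGcoeff : ∀ e, G.coeff e
        = (algebraMap R (FractionRing R) (algebraMap k R c) ^ e
          - algebraMap R (FractionRing R) (algebraMap k R c) ^ d₀) * (Ffn 𝒜 y).coeff e := by
      intro e
      rw [hG, Polynomial.coeff_sub, scP_coeff, Polynomial.coeff_C_mul, sub_mul]
    have hGsupp : G.support ⊆ (Ffn 𝒜 y).support.erase d₀ := by
      intro e he
      have hne' : G.coeff e ≠ 0 := Polynomial.mem_support_iff.mp he
      rw [hGcoeff] at hne'
      refine Finset.mem_erase.mpr ⟨?_, Polynomial.mem_support_iff.mpr (right_ne_zero_of_mul hne')⟩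
      intro h
      subst h
      simp at hne'
    have hGcard : G.support.card ≤ N := by
      have h1 := Finset.card_le_card hGsupp
      rw [Finset.card_erase_of_mem hd₀] at h1
      omega
    have hIH : ∀ e, G.coeff e ∈ integralClosure R (FractionRing R) := by
      intro e
      have := IH z (by rw [hFz]; exact hGcard) e
      rwa [hFz] at this
    have hmemE : ∀ e ∈ (Ffn 𝒜 y).support.erase d₀,
        (Ffn 𝒜 y).coeff e ∈ integralClosure R (FractionRing R) := by
      intro e he
      have hw : c ^ e - c ^ d₀ ≠ 0 := sub_ne_zero.mpr (hcroot e he)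
      have hkey : (Ffn 𝒜 y).coeff e
          = algebraMap R (FractionRing R) (algebraMap k R (c ^ e - c ^ d₀)⁻¹)
            * G.coeff e := by
        rw [hGcoeff, ← mul_assoc]
        have hinv : algebraMap R (FractionRing R) (algebraMap k R (c ^ e - c ^ d₀)⁻¹)
            * (algebraMap R (FractionRing R) (algebraMap k R c) ^ e
              - algebraMap R (FractionRing R) (algebraMap k R c) ^ d₀) = 1 := by
          rw [← map_pow, ← map_pow, ← map_pow, ← map_pow, ← map_sub, ← map_sub,
            ← map_mul, ← map_mul, inv_mul_cancel₀ hw, map_one, map_one]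
        rw [hinv, one_mul]
      rw [hkey]
      exact mul_mem (Subalgebra.algebraMap_mem _ _) (hIH e)
    by_cases hdd : d = d₀
    · subst hdd
      have hsum : ((Ffn 𝒜 y).coeff d : FractionRing R)
          = ↑y - ∑ e ∈ (Ffn 𝒜 y).support.erase d, (Ffn 𝒜 y).coeff e := by
        have h1 : (∑ e ∈ (Ffn 𝒜 y).support, (Ffn 𝒜 y).coeff e) = (y : FractionRing R) := by
          rw [← Ffn_eval_one 𝒜 y, Polynomial.eval_eq_sum, Polynomial.sum_def]
          exact Finset.sum_congr rfl (fun e _ => by rw [one_pow, mul_one])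
        rw [← h1, ← Finset.add_sum_erase _ _ hd₀]
        ring
      rw [hsum]
      exact sub_mem y.2 (sum_mem (fun e he => hmemE e he))
    · by_cases hds : d ∈ (Ffn 𝒜 y).support
      · exact hmemE d (Finset.mem_erase.mpr ⟨hdd, hds⟩)
      · rw [Polynomial.notMem_support_iff.mp hds]
        exact zero_mem _


/-! ### Homogeneous positive-degree elements lie in every prime over the irrelevant ideal -/

lemma homog_mem_P (P : Ideal (integralClosure R (FractionRing R)))
    (hP : P.IsPrime)
    (hPc : P.comap (algebraMap R (integralClosure R (FractionRing R)))
      = (HomogeneousIdeal.irrelevant 𝒜).toIdeal)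
    (a : FractionRing R) (hmem : a ∈ integralClosure R (FractionRing R))
    (e : ℕ) (he : e ≠ 0)
    (hhom : tauHat 𝒜 a = algebraMap ((FractionRing R)[X]) (FractionRing ((FractionRing R)[X]))
      (Polynomial.C a * Polynomial.X ^ e)) :
    (⟨a, hmem⟩ : integralClosure R (FractionRing R)) ∈ P := by
  classical
  obtain ⟨q, qm, hq⟩ := hmem
  set n := q.natDegree with hn
  have hn0 : n ≠ 0 := by
    intro h
    rw [hn] at h
    have hq1 : q = 1 := qm.natDegree_eq_zero.mp h
    rw [hq1] at hq
    simp at hq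
  -- the integral equation as a finite sum
  have h0K : (∑ i ∈ Finset.range (n + 1),
      algebraMap R (FractionRing R) (q.coeff i) * a ^ i) = 0 := by
    rw [← Polynomial.eval₂_eq_sum_range]
    exact hq
  -- transport under tauHat
  have hH : (∑ i ∈ Finset.range (n + 1),
      tauK 𝒜 (q.coeff i) * (Polynomial.C a * Polynomial.X ^ e) ^ i) = 0 := by
    apply IsFractionRing.injective ((FractionRing R)[X]) (FractionRing ((FractionRing R)[X]))
    rw [map_sum, map_zero]
    have := congrArg (tauHat 𝒜) h0K
    rw [map_sum, map_zero] at this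
    rw [← this]
    refine Finset.sum_congr rfl (fun i _ => ?_)
    rw [map_mul, map_mul, map_pow, map_pow, tauHat_algebraMap, hhom]
  -- extract the coefficient in degree e * n
  have hterm : ∀ i ∈ Finset.range (n + 1),
      (tauK 𝒜 (q.coeff i) * (Polynomial.C a * Polynomial.X ^ e) ^ i).coeff (e * n)
        = algebraMap R (FractionRing R)
            (DirectSum.decompose 𝒜 (q.coeff i) (e * n - e * i)) * a ^ i := by
    intro i hi
    have hile : i ≤ n := Nat.lt_succ_iff.mp (Finset.mem_range.mp hi)
    rw [mul_pow, ← Polynomial.C_pow, ← pow_mul, ← mul_assoc,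
      Polynomial.coeff_mul_X_pow', if_pos (Nat.mul_le_mul_left e hile),
      Polynomial.coeff_mul_C, tauK_coeff]
  have hsum0 : (∑ i ∈ Finset.range (n + 1),
      algebraMap R (FractionRing R)
        (DirectSum.decompose 𝒜 (q.coeff i) (e * n - e * i)) * a ^ i) = 0 := by
    rw [← Finset.sum_congr rfl hterm]
    have := congrArg (fun p => Polynomial.coeff p (e * n)) hH
    simpa [Polynomial.finset_sum_coeff] using this
  -- isolate the top term
  have htop : (DirectSum.decompose 𝒜 (q.coeff n) (e * n - e * n) : R) = 1 := by
    rw [Nat.sub_self, hn, qm.coeff_natDegree]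
    exact DirectSum.decompose_of_mem_same 𝒜 (SetLike.one_mem_graded 𝒜)
  rw [Finset.sum_range_succ, htop, map_one, one_mul] at hsum0
  have heq : a ^ n = - ∑ i ∈ Finset.range n,
      algebraMap R (FractionRing R)
        (DirectSum.decompose 𝒜 (q.coeff i) (e * n - e * i)) * a ^ i := by
    linear_combination hsum0
  -- now work in the integral closure
  set aS : integralClosure R (FractionRing R) := ⟨a, ⟨q, qm, hq⟩⟩ with haS
  have heqS : aS ^ n = - ∑ i ∈ Finset.range n,
      algebraMap R (integralClosure R (FractionRing R))
        (DirectSum.decompose 𝒜 (q.coeff i) (e * n - e * i)) * aS ^ i := by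
    apply Subtype.ext
    push_cast
    exact heq
  have hmemP : aS ^ n ∈ P := by
    rw [heqS]
    refine neg_mem (Ideal.sum_mem P (fun i hi => ?_))
    refine Ideal.mul_mem_right _ P ?_
    have hbmem : (DirectSum.decompose 𝒜 (q.coeff i) (e * n - e * i) : R)
        ∈ (HomogeneousIdeal.irrelevant 𝒜).toIdeal := by
      rw [HomogeneousIdeal.toIdeal_irrelevant, RingHom.mem_ker,
        GradedRing.projZeroRingHom_apply]
      have hipos : e * n - e * i ≠ 0 := by
        have h2 : e * i < e * n :=
          mul_lt_mul_of_pos_left (Finset.mem_range.mp hi) (Nat.pos_of_ne_zero he)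
        omega
      exact DirectSum.decompose_of_mem_ne 𝒜 (SetLike.coe_mem _) hipos
    rw [← hPc] at hbmem
    exact hbmem
  exact hP.mem_of_pow_mem n hmemP

lemma ker_le_P (P : Ideal (integralClosure R (FractionRing R)))
    (hP : P.IsPrime)
    (hPc : P.comap (algebraMap R (integralClosure R (FractionRing R)))
      = (HomogeneousIdeal.irrelevant 𝒜).toIdeal) [Infinite k] :
    RingHom.ker (rho 𝒜) ≤ P := by
  classical
  intro y hy
  have hy0 : (Ffn 𝒜 y).coeff 0 = 0 := hy
  have hsum : y = ∑ e ∈ (Ffn 𝒜 y).support,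
      (⟨(Ffn 𝒜 y).coeff e, coeff_mem 𝒜 y e⟩ : integralClosure R (FractionRing R)) := by
    apply Subtype.ext
    push_cast
    rw [← Ffn_eval_one 𝒜 y, Polynomial.eval_eq_sum, Polynomial.sum_def]
    exact (Finset.sum_congr rfl (fun e _ => by rw [one_pow, mul_one])).symm
  rw [hsum]
  refine Ideal.sum_mem P (fun e he => ?_)
  have he0 : e ≠ 0 := by
    intro h
    subst h
    exact (Polynomial.mem_support_iff.mp he) hy0
  exact homog_mem_P 𝒜 P hP hPc _ (coeff_mem 𝒜 y e) e he0 (coeff_homog 𝒜 y e)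

end UBAux

/-- Let `X = Spec R` be an irreducible affine variety over an algebraically
closed field `k`, equipped with an action of the multiplicative monoid `𝔸¹` extending a
`Gₘ`-action; equivalently, `R` carries an `ℕ`-grading `𝒜`.  Suppose the fixed locus
`X⁰ = X^{Gₘ}` consists of a single (closed) point `x`, i.e. the irrelevant ideal
`R₊` is a maximal ideal.  Then `X` is unibranch at `x`: the normalization of `X` (the
integral closure `R'` of `R` in its fraction field) has exactly one point above `x`. -/
theorem unibranch_of_monoid_action_single_fixed_point
    (k : Type) [Field k] [IsAlgClosed k]
    (R : Type) [CommRing R] [IsDomain R] [Algebra k R]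
    (hft : Algebra.FiniteType k R)
    (𝒜 : ℕ → Submodule k R) [GradedAlgebra 𝒜]
    (hfix : (HomogeneousIdeal.irrelevant 𝒜).toIdeal.IsMaximal) :
    ∃! P : Ideal (integralClosure R (FractionRing R)),
      P.IsPrime ∧
        P.comap (algebraMap R (integralClosure R (FractionRing R))) =
          (HomogeneousIdeal.irrelevant 𝒜).toIdeal := by
  classical
  set mId : Ideal (integralClosure R (FractionRing R)) := RingHom.ker (rho 𝒜) with hm
  haveI hprime : mId.IsPrime := RingHom.ker_isPrime (rho 𝒜)
  have hcomap : mId.comap (algebraMap R (integralClosure R (FractionRing R)))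
      = (HomogeneousIdeal.irrelevant 𝒜).toIdeal := by
    ext r
    rw [Ideal.mem_comap, hm, RingHom.mem_ker, rho_algebraMap,
      HomogeneousIdeal.toIdeal_irrelevant, RingHom.mem_ker,
      GradedRing.projZeroRingHom_apply]
    constructor
    · intro h
      apply IsFractionRing.injective R (FractionRing R)
      rw [h, map_zero]
    · intro h
      rw [h, map_zero]
  have hmax : mId.IsMaximal :=
    Ideal.IntegralClosure.isMaximal_of_isMaximal_comap (R := R) (A := integralClosure R (FractionRing R)) mId
      (by rw [hcomap]; exact hfix)
  refine ⟨mId, ⟨hprime, hcomap⟩, ?_⟩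
  rintro P ⟨hP, hPc⟩
  exact ((hmax.eq_of_le hP.ne_top (ker_le_P 𝒜 P hP hPc)).symm)
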